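/- Assume μ₂ ≥ μ₁ and h₁/μ₁ ≤ h₂/μ₂. Fix k, ℓ with k + ℓ = C₁, k ≥ 1 and ℓ < C₂. Then: (1) D(i,k,ℓ) − D(i+1,k,ℓ) ≤ 0 for all i ≥ 0, i.e. i ↦ D(i,k,ℓ) is non-decreasing; (2) if moreover μ₂ > μ₁, there exists a natural number N such that for all i ≥ 0, D(i,k,ℓ) ≤ 0 if and only if i < N, and moreover D(i,k,ℓ) > 0 for all sufficiently large i. -/

import Mathlib

/-- Overall service rate `d(k,ℓ) = k·μ₁ + min(ℓ,C₂)·μ₂`. -/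
noncomputable def dRate (C₂ : ℕ) (μ₁ μ₂ : ℝ) (k ℓ : ℕ) : ℝ :=
  (k : ℝ) * μ₁ + ((min ℓ C₂ : ℕ) : ℝ) * μ₂

/-- Membership of `(i,k,ℓ)` in the state space `X`. -/
def memX (C₁ : ℕ) (i k ℓ : ℕ) : Prop :=
  (i = 0 ∧ k + ℓ < C₁) ∨ k + ℓ = C₁

/-- `v` satisfies the optimality (Bellman) equations of the clearing system.
Terms whose coefficient `k·μ₁` or `min(ℓ,C₂)·μ₂` vanishes contribute `0`,
matching the convention that such summands are omitted. -/
def IsValue (C₁ C₂ : ℕ) (μ₁ μ₂ h₀ h₁ h₂ : ℝ) (v : ℕ → ℕ → ℕ → ℝ) : Prop :=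
  v 0 0 0 = 0 ∧
  (∀ k ℓ : ℕ, k + ℓ ≤ C₁ → ¬(k = 0 ∧ ℓ = 0) →
    v 0 k ℓ = ((k : ℝ) * h₁ + (ℓ : ℝ) * h₂) / dRate C₂ μ₁ μ₂ k ℓ
      + ((k : ℝ) * μ₁ / dRate C₂ μ₁ μ₂ k ℓ) * v 0 (k - 1) ℓ
      + (((min ℓ C₂ : ℕ) : ℝ) * μ₂ / dRate C₂ μ₁ μ₂ k ℓ) * v 0 k (ℓ - 1)) ∧
  (∀ i k ℓ : ℕ, k + ℓ = C₁ →
    v (i + 1) k ℓ =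
      (((i : ℝ) + 1) * h₀ + (k : ℝ) * h₁ + (ℓ : ℝ) * h₂) / dRate C₂ μ₁ μ₂ k ℓ
      + ((k : ℝ) * μ₁ / dRate C₂ μ₁ μ₂ k ℓ) *
          min (v i k ℓ) (v i (k - 1) (ℓ + 1))
      + (((min ℓ C₂ : ℕ) : ℝ) * μ₂ / dRate C₂ μ₁ μ₂ k ℓ) *
          min (v i (k + 1) (ℓ - 1)) (v i k ℓ))

/-- The difference `D(i,k,ℓ) = v(i,k,ℓ) − v(i,k−1,ℓ+1)`. -/
noncomputable def Dv (v : ℕ → ℕ → ℕ → ℝ) (i k ℓ : ℕ) : ℝ :=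
  v i k ℓ - v i (k - 1) (ℓ + 1)

/- ======================= auxiliary development ======================= -/

section St5
variable (C₁ C₂ : ℕ) (μ₁ μ₂ h₀ h₁ h₂ : ℝ) (v : ℕ → ℕ → ℕ → ℝ)

/-- boundary value function -/
noncomputable def st5w (i k : ℕ) : ℝ := v i k (C₁ - k)
/-- boundary difference -/
noncomputable def st5D (i k : ℕ) : ℝ := st5w C₁ v i k - st5w C₁ v i (k-1)
/-- boundary min -/
noncomputable def st5M (i k : ℕ) : ℝ := min (st5w C₁ v i k) (st5w C₁ v i (k-1))
/-- boundary rate -/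
noncomputable def st5d (k : ℕ) : ℝ := (k:ℝ)*μ₁ + ((min (C₁-k) C₂ : ℕ):ℝ)*μ₂
/-- cost numerator -/
noncomputable def st5G (i k : ℕ) : ℝ :=
  ((i:ℝ)+1)*h₀ + (k:ℝ)*h₁ + ((C₁-k : ℕ):ℝ)*h₂
/-- base profile -/
noncomputable def st5g (ℓ : ℕ) : ℝ :=
  ∑ t ∈ Finset.range ℓ, ((max (t+1) C₂ : ℕ):ℝ) * h₂ / ((C₂:ℝ)*μ₂)
end St5

section St5L
variable {C₁ C₂ : ℕ} {μ₁ μ₂ h₀ h₁ h₂ : ℝ} {v : ℕ → ℕ → ℕ → ℝ}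
variable (hC₂pos : 1 ≤ C₂) (hC : C₂ < C₁)
variable (hμ₁ : 0 < μ₁) (hμ₂ : 0 < μ₂)
variable (hh₀ : 0 < h₀) (hh₁ : 0 < h₁) (hh₂ : 0 < h₂)
variable (hv : IsValue C₁ C₂ μ₁ μ₂ h₀ h₁ h₂ v)
variable (hμ : μ₁ ≤ μ₂) (hcost : h₁ / μ₁ ≤ h₂ / μ₂)

lemma st5d_pos (hC₂pos : 1 ≤ C₂) (hC : C₂ < C₁) (hμ₁ : 0 < μ₁) (hμ₂ : 0 < μ₂)
    (k : ℕ) (hk : k ≤ C₁) : 0 < st5d C₁ C₂ μ₁ μ₂ k := by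
  unfold st5d
  rcases Nat.eq_zero_or_pos k with h0 | h1
  · subst h0
    have h : min (C₁ - 0) C₂ = C₂ := by omega
    rw [h]; push_cast; nlinarith [(Nat.one_le_cast (α := ℝ)).mpr hC₂pos]
  · have hk1 : (1:ℝ) ≤ (k:ℝ) := Nat.one_le_cast.mpr h1
    have : (0:ℝ) ≤ ((min (C₁-k) C₂ : ℕ):ℝ) := Nat.cast_nonneg _
    nlinarith

lemma st5_bellman (hC₂pos : 1 ≤ C₂) (hC : C₂ < C₁) (hμ₁ : 0 < μ₁) (hμ₂ : 0 < μ₂)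
    (hv : IsValue C₁ C₂ μ₁ μ₂ h₀ h₁ h₂ v)
    (i k : ℕ) (hk1 : 1 ≤ k) (hk : k ≤ C₁) :
    st5d C₁ C₂ μ₁ μ₂ k * st5w C₁ v (i+1) k =
      st5G C₁ h₀ h₁ h₂ i k + (k:ℝ)*μ₁ * st5M C₁ v i k
        + ((min (C₁-k) C₂ : ℕ):ℝ)*μ₂ * st5M C₁ v i (k+1) := by
  have hb := hv.2.2 i k (C₁ - k) (by omega)
  have hd : dRate C₂ μ₁ μ₂ k (C₁ - k) = st5d C₁ C₂ μ₁ μ₂ k := rfl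
  have hdpos := st5d_pos hC₂pos hC hμ₁ hμ₂ k hk
  have e1 : C₁ - k + 1 = C₁ - (k-1) := by omega
  have e2 : C₁ - k - 1 = C₁ - (k+1) := by omega
  rw [hd, e1, e2] at hb
  have hM1 : min (v i k (C₁-k)) (v i (k-1) (C₁-(k-1))) = st5M C₁ v i k := rfl
  have hM2 : min (v i (k+1) (C₁-(k+1))) (v i k (C₁-k)) = st5M C₁ v i (k+1) := rfl
  rw [hM1, hM2] at hb
  unfold st5w st5G
  rw [hb]
  field_simp
  try ring

lemma st5_bellman0 (hC₂pos : 1 ≤ C₂) (hC : C₂ < C₁) (hμ₁ : 0 < μ₁) (hμ₂ : 0 < μ₂)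
    (hv : IsValue C₁ C₂ μ₁ μ₂ h₀ h₁ h₂ v) (i : ℕ) :
    st5d C₁ C₂ μ₁ μ₂ 0 * st5w C₁ v (i+1) 0 =
      st5G C₁ h₀ h₁ h₂ i 0 + ((min C₁ C₂ : ℕ):ℝ)*μ₂ * st5M C₁ v i 1 := by
  have hb := hv.2.2 i 0 (C₁ - 0) (by omega)
  have hd : dRate C₂ μ₁ μ₂ 0 (C₁ - 0) = st5d C₁ C₂ μ₁ μ₂ 0 := rfl
  have hdpos := st5d_pos hC₂pos hC hμ₁ hμ₂ 0 (by omega)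
  rw [hd] at hb
  have e2 : C₁ - 0 - 1 = C₁ - (0+1) := by omega
  rw [e2] at hb
  have hM2 : min (v i (0+1) (C₁-(0+1))) (v i 0 (C₁-0)) = st5M C₁ v i 1 := rfl
  rw [hM2] at hb
  unfold st5w st5G
  rw [hb]
  simp only [Nat.sub_zero]
  push_cast
  field_simp
  try ring

lemma st5minmax (a b : ℝ) : min a b = a - max (a - b) 0 := by
  rcases le_total a b with h | h
  · simp [min_eq_left h, max_eq_right (by linarith : a - b ≤ 0)]
  · simp [min_eq_right h, max_eq_left (by linarith : (0:ℝ) ≤ a - b)]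

lemma st5minmin (a b : ℝ) : min a b = b + min (a - b) 0 := by
  rcases le_total a b with h | h
  · rw [min_eq_left h, min_eq_left (by linarith : a - b ≤ (0:ℝ))]; ring
  · rw [min_eq_right h, min_eq_right (by linarith : (0:ℝ) ≤ a - b)]; ring

lemma st5_key (hC₂pos : 1 ≤ C₂) (hC : C₂ < C₁) (hμ₁ : 0 < μ₁) (hμ₂ : 0 < μ₂)
    (hv : IsValue C₁ C₂ μ₁ μ₂ h₀ h₁ h₂ v)
    (i k : ℕ) (hk1 : 1 ≤ k) (hk : k ≤ C₁) :
    st5d C₁ C₂ μ₁ μ₂ k * (st5w C₁ v (i+1) k - st5w C₁ v i k) =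
      st5G C₁ h₀ h₁ h₂ i k - (k:ℝ)*μ₁ * max (st5D C₁ v i k) 0
        + ((min (C₁-k) C₂ : ℕ):ℝ)*μ₂ * min (st5D C₁ v i (k+1)) 0 := by
  have hb := st5_bellman hC₂pos hC hμ₁ hμ₂ hv i k hk1 hk
  have h1 : st5M C₁ v i k = st5w C₁ v i k - max (st5D C₁ v i k) 0 := st5minmax _ _
  have h2 : st5M C₁ v i (k+1) = st5w C₁ v i k + min (st5D C₁ v i (k+1)) 0 := by
    have := st5minmin (st5w C₁ v i (k+1)) (st5w C₁ v i k)
    simpa [st5M, st5D] using this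
  rw [h1, h2] at hb
  have hd : st5d C₁ C₂ μ₁ μ₂ k = (k:ℝ)*μ₁ + ((min (C₁-k) C₂ : ℕ):ℝ)*μ₂ := rfl
  linear_combination hb - st5w C₁ v i k * hd

lemma st5_key0 (hC₂pos : 1 ≤ C₂) (hC : C₂ < C₁) (hμ₁ : 0 < μ₁) (hμ₂ : 0 < μ₂)
    (hv : IsValue C₁ C₂ μ₁ μ₂ h₀ h₁ h₂ v) (i : ℕ) :
    st5d C₁ C₂ μ₁ μ₂ 0 * (st5w C₁ v (i+1) 0 - st5w C₁ v i 0) =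
      st5G C₁ h₀ h₁ h₂ i 0 + ((min C₁ C₂ : ℕ):ℝ)*μ₂ * min (st5D C₁ v i 1) 0 := by
  have hb := st5_bellman0 hC₂pos hC hμ₁ hμ₂ hv (v := v) i
  have h2 : st5M C₁ v i 1 = st5w C₁ v i 0 + min (st5D C₁ v i 1) 0 := by
    have := st5minmin (st5w C₁ v i 1) (st5w C₁ v i 0)
    simpa [st5M, st5D] using this
  rw [h2] at hb
  have hd : st5d C₁ C₂ μ₁ μ₂ 0 = (0:ℝ)*μ₁ + ((min (C₁-0) C₂ : ℕ):ℝ)*μ₂ := by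
    simp [st5d]
  have hm : C₁ - 0 = C₁ := by omega
  rw [hm] at hd
  linear_combination hb - st5w C₁ v i 0 * hd

lemma st5_gstep (ℓ : ℕ) :
    st5g C₂ μ₂ h₂ (ℓ+1) - st5g C₂ μ₂ h₂ ℓ = ((max (ℓ+1) C₂ : ℕ):ℝ) * h₂ / ((C₂:ℝ)*μ₂) := by
  unfold st5g
  rw [Finset.sum_range_succ]
  ring

lemma st5_gid (hC₂pos : 1 ≤ C₂) (hμ₂ : 0 < μ₂) (ℓ : ℕ) :
    ((min ℓ C₂ : ℕ):ℝ)*μ₂*(st5g C₂ μ₂ h₂ ℓ - st5g C₂ μ₂ h₂ (ℓ-1)) = (ℓ:ℝ)*h₂ := by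
  rcases Nat.eq_zero_or_pos ℓ with h0 | h1
  · subst h0; simp
  · obtain ⟨t, rfl⟩ : ∃ t, ℓ = t + 1 := ⟨ℓ-1, by omega⟩
    have hstep := st5_gstep (C₂ := C₂) (μ₂ := μ₂) (h₂ := h₂) t
    have hts : t + 1 - 1 = t := rfl
    rw [hts, hstep]
    have hmm : (min (t+1) C₂) * (max (t+1) C₂) = (t+1) * C₂ := min_mul_max _ _
    have hmmr : ((min (t+1) C₂ : ℕ):ℝ) * ((max (t+1) C₂ : ℕ):ℝ) = ((t:ℝ)+1) * (C₂:ℝ) := by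
      rw [← Nat.cast_mul, hmm]; push_cast; ring
    have hC2 : ((C₂:ℕ):ℝ) ≠ 0 := Nat.cast_ne_zero.mpr (by omega)
    field_simp
    push_cast at hmmr
    push_cast
    linear_combination h₂*hmmr

lemma st5_cf (hC₂pos : 1 ≤ C₂) (hC : C₂ < C₁) (hμ₁ : 0 < μ₁) (hμ₂ : 0 < μ₂)
    (hv : IsValue C₁ C₂ μ₁ μ₂ h₀ h₁ h₂ v) :
    ∀ s k ℓ : ℕ, k + ℓ = s → s ≤ C₁ →
    v 0 k ℓ = (k:ℝ)*h₁/μ₁ + st5g C₂ μ₂ h₂ ℓ := by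
  intro s
  induction s with
  | zero =>
    intro k ℓ hs _
    obtain ⟨rfl, rfl⟩ : k = 0 ∧ ℓ = 0 := by omega
    simp [hv.1, st5g]
  | succ s ih =>
    intro k ℓ hs hsle
    have hb := hv.2.1 k ℓ (by omega) (by omega)
    have hdpos : 0 < dRate C₂ μ₁ μ₂ k ℓ := by
      have hor : 1 ≤ k ∨ 1 ≤ min ℓ C₂ := by omega
      have c1 : (0:ℝ) ≤ (k:ℝ)*μ₁ := by positivity
      have c2 : (0:ℝ) ≤ ((min ℓ C₂ : ℕ):ℝ)*μ₂ := by positivity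
      unfold dRate
      rcases hor with h | h
      · have : (1:ℝ) ≤ (k:ℝ) := Nat.one_le_cast.mpr h
        nlinarith
      · have : (1:ℝ) ≤ ((min ℓ C₂ : ℕ):ℝ) := Nat.one_le_cast.mpr h
        nlinarith
    have hdne : dRate C₂ μ₁ μ₂ k ℓ ≠ 0 := ne_of_gt hdpos
    have hgid := st5_gid (C₂ := C₂) (μ₂ := μ₂) (h₂ := h₂) hC₂pos hμ₂ ℓ
    have hdr : dRate C₂ μ₁ μ₂ k ℓ = (k:ℝ)*μ₁ + ((min ℓ C₂ : ℕ):ℝ)*μ₂ := rfl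
    have hb' : dRate C₂ μ₁ μ₂ k ℓ * v 0 k ℓ =
        ((k:ℝ)*h₁ + (ℓ:ℝ)*h₂) + (k:ℝ)*μ₁ * v 0 (k-1) ℓ
          + ((min ℓ C₂ : ℕ):ℝ)*μ₂ * v 0 k (ℓ-1) := by
      rw [hb]; field_simp; try ring
    apply mul_left_cancel₀ hdne
    rw [hb']
    rcases Nat.eq_zero_or_pos k with hk0 | hk1
    · -- k = 0, ℓ ≥ 1
      subst hk0
      have hl1 : 1 ≤ ℓ := by omega
      have hih2 := ih 0 (ℓ-1) (by omega) (by omega)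
      rw [hih2, hdr]
      push_cast at hgid
      field_simp
      push_cast
      linear_combination -μ₁ * hgid
    · rcases Nat.eq_zero_or_pos ℓ with hl0 | hl1
      · -- ℓ = 0
        subst hl0
        have hih1 := ih (k-1) 0 (by omega) (by omega)
        rw [hih1, hdr]
        have hkc : ((k-1:ℕ):ℝ) = (k:ℝ) - 1 := by
          push_cast [Nat.cast_sub hk1]; ring
        rw [hkc]
        have hm0 : ((min 0 C₂ : ℕ):ℝ) = 0 := by norm_num
        rw [hm0]
        field_simp
        ring
      · -- k ≥ 1, ℓ ≥ 1
        have hih1 := ih (k-1) ℓ (by omega) (by omega)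
        have hih2 := ih k (ℓ-1) (by omega) (by omega)
        rw [hih1, hih2, hdr]
        have hkc : ((k-1:ℕ):ℝ) = (k:ℝ) - 1 := by
          push_cast [Nat.cast_sub hk1]; ring
        rw [hkc]
        push_cast at hgid
        field_simp
        push_cast
        linear_combination -μ₁ * hgid

lemma st5_D0 (hC₂pos : 1 ≤ C₂) (hC : C₂ < C₁) (hμ₁ : 0 < μ₁) (hμ₂ : 0 < μ₂)
    (hv : IsValue C₁ C₂ μ₁ μ₂ h₀ h₁ h₂ v)
    (k : ℕ) (hk1 : 1 ≤ k) (hk : k ≤ C₁) :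
    st5D C₁ v 0 k = h₁/μ₁ - ((max (C₁-k+1) C₂ : ℕ):ℝ)*h₂/((C₂:ℝ)*μ₂) := by
  have h1 := st5_cf hC₂pos hC hμ₁ hμ₂ hv (k + (C₁-k)) k (C₁-k) rfl (by omega)
  have h2 := st5_cf hC₂pos hC hμ₁ hμ₂ hv ((k-1) + (C₁-(k-1))) (k-1) (C₁-(k-1)) rfl (by omega)
  unfold st5D st5w
  rw [h1, h2]
  have e1 : C₁ - (k-1) = (C₁-k) + 1 := by omega
  rw [e1]
  have hstep := st5_gstep (C₂ := C₂) (μ₂ := μ₂) (h₂ := h₂) (C₁-k)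
  have e2 : C₁ - k + 1 = (C₁-k) + 1 := rfl
  rw [e2]
  have hkc : ((k-1:ℕ):ℝ) = (k:ℝ) - 1 := by
    push_cast [Nat.cast_sub hk1]; ring
  rw [hkc]
  have hμ₁' : μ₁ ≠ 0 := ne_of_gt hμ₁
  linear_combination -hstep


lemma st5_h12 (hμ₁ : 0 < μ₁) (hμ₂ : 0 < μ₂) (hμ : μ₁ ≤ μ₂) (hcost : h₁ / μ₁ ≤ h₂ / μ₂)
    (hh₂ : 0 < h₂) : h₁ ≤ h₂ := by
  rw [div_le_div_iff₀ hμ₁ hμ₂] at hcost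
  nlinarith

lemma st5_D0_nonpos (hC₂pos : 1 ≤ C₂) (hC : C₂ < C₁) (hμ₁ : 0 < μ₁) (hμ₂ : 0 < μ₂)
    (hv : IsValue C₁ C₂ μ₁ μ₂ h₀ h₁ h₂ v) (hcost : h₁ / μ₁ ≤ h₂ / μ₂) (hh₂ : 0 < h₂)
    (k : ℕ) (hk1 : 1 ≤ k) (hk : k ≤ C₁) : st5D C₁ v 0 k ≤ 0 := by
  rw [st5_D0 hC₂pos hC hμ₁ hμ₂ hv k hk1 hk]
  have hle : (C₂:ℝ) ≤ ((max (C₁-k+1) C₂ : ℕ):ℝ) := by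
    exact_mod_cast Nat.cast_le.mpr (le_max_right _ _)
  have hC2pos : (0:ℝ) < (C₂:ℝ) := by exact_mod_cast hC₂pos
  have h1 : h₂/μ₂ ≤ ((max (C₁-k+1) C₂ : ℕ):ℝ)*h₂/((C₂:ℝ)*μ₂) := by
    rw [div_le_div_iff₀ hμ₂ (by positivity)]
    nlinarith [mul_le_mul_of_nonneg_left hle (by positivity : (0:ℝ) ≤ h₂*μ₂)]
  linarith [hcost]

/-- `Δ₀(k) = h₀/d(k) + h₁/μ₁` in multiplied form. -/
lemma st5_Delta0 (hC₂pos : 1 ≤ C₂) (hC : C₂ < C₁) (hμ₁ : 0 < μ₁) (hμ₂ : 0 < μ₂)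
    (hv : IsValue C₁ C₂ μ₁ μ₂ h₀ h₁ h₂ v) (hcost : h₁ / μ₁ ≤ h₂ / μ₂) (hh₂ : 0 < h₂)
    (k : ℕ) (hk : k ≤ C₁) :
    st5d C₁ C₂ μ₁ μ₂ k * (st5w C₁ v 1 k - st5w C₁ v 0 k)
      = h₀ + (h₁/μ₁) * st5d C₁ C₂ μ₁ μ₂ k := by
  have hdr : st5d C₁ C₂ μ₁ μ₂ k = (k:ℝ)*μ₁ + ((min (C₁-k) C₂ : ℕ):ℝ)*μ₂ := rfl
  rcases Nat.eq_zero_or_pos k with hk0 | hk1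
  · subst hk0
    have hkey := st5_key0 hC₂pos hC hμ₁ hμ₂ hv (v := v) 0
    have hD1 := st5_D0 hC₂pos hC hμ₁ hμ₂ hv 1 le_rfl (by omega)
    have hmin : min (st5D C₁ v 0 1) 0 = st5D C₁ v 0 1 :=
      min_eq_left (st5_D0_nonpos hC₂pos hC hμ₁ hμ₂ hv hcost hh₂ 1 le_rfl (by omega))
    rw [hmin, hD1] at hkey
    rw [hkey, hdr]
    have e1 : C₁ - 1 + 1 = C₁ := by omega
    rw [e1] at *
    have e2 : max C₁ C₂ = C₁ := by omega
    have e3 : min (C₁ - 0) C₂ = C₂ := by omega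
    have e4 : min C₁ C₂ = C₂ := by omega
    rw [e2] at *
    rw [e3, e4]
    unfold st5G
    have e5 : C₁ - 0 = C₁ := by omega
    rw [e5]
    have hC2pos : (0:ℝ) < (C₂:ℝ) := by exact_mod_cast hC₂pos
    field_simp
    ring
  · have hkey := st5_key hC₂pos hC hμ₁ hμ₂ hv 0 k hk1 hk
    have hmax : max (st5D C₁ v 0 k) 0 = 0 :=
      max_eq_right (st5_D0_nonpos hC₂pos hC hμ₁ hμ₂ hv hcost hh₂ k hk1 hk)
    rw [hmax] at hkey
    rcases Nat.lt_or_ge k C₁ with hklt | hke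
    · have hD1 := st5_D0 hC₂pos hC hμ₁ hμ₂ hv (k+1) (by omega) (by omega)
      have hmin : min (st5D C₁ v 0 (k+1)) 0 = st5D C₁ v 0 (k+1) :=
        min_eq_left (st5_D0_nonpos hC₂pos hC hμ₁ hμ₂ hv hcost hh₂ (k+1) (by omega) (by omega))
      rw [hmin, hD1] at hkey
      have e1 : C₁ - (k+1) + 1 = C₁ - k := by omega
      rw [e1] at hkey
      rw [hkey, hdr]
      unfold st5G
      have hmm : (min (C₁-k) C₂) * (max (C₁-k) C₂) = (C₁-k) * C₂ := min_mul_max _ _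
      have hmmr : ((min (C₁-k) C₂ : ℕ):ℝ) * ((max (C₁-k) C₂ : ℕ):ℝ)
          = ((C₁-k:ℕ):ℝ) * (C₂:ℝ) := by
        rw [← Nat.cast_mul, hmm]; push_cast; ring
      have hC2pos : (0:ℝ) < (C₂:ℝ) := by exact_mod_cast hC₂pos
      push_cast [Nat.cast_sub hk] at hmmr ⊢
      field_simp
      linear_combination (-μ₁ * h₂) * hmmr
    · have e0 : min (C₁ - k) C₂ = 0 := by omega
      rw [e0] at hkey
      rw [hkey, hdr, e0]
      unfold st5G
      have e1 : ((C₁ - k : ℕ):ℝ) = 0 := by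
        rw [show C₁ - k = 0 from by omega]; norm_num
      rw [e1]
      push_cast
      field_simp
      ring

/-- invariant P: `D ≤ 0` in the low region -/
def st5P (C₁ : ℕ) (v : ℕ → ℕ → ℕ → ℝ) (C₂ i : ℕ) : Prop :=
  ∀ k, 1 ≤ k → k ≤ C₁ - C₂ → st5D C₁ v i k ≤ 0

/-- invariant Q: `d·Δ ≥ h₀` -/
def st5Q (C₁ C₂ : ℕ) (μ₁ μ₂ h₀ : ℝ) (v : ℕ → ℕ → ℕ → ℝ) (i : ℕ) : Prop :=
  ∀ k, k ≤ C₁ → h₀ ≤ st5d C₁ C₂ μ₁ μ₂ k * (st5w C₁ v (i+1) k - st5w C₁ v i k)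

/-- invariant R: quantitative monotonicity of Δ in the high region -/
def st5R (C₁ C₂ : ℕ) (μ₁ μ₂ h₀ : ℝ) (v : ℕ → ℕ → ℕ → ℝ) (i : ℕ) : Prop :=
  ∀ k, C₁ - C₂ + 1 ≤ k → k ≤ C₁ →
    (st5w C₁ v (i+1) (k-1) - st5w C₁ v i (k-1))
      + h₀*(1/st5d C₁ C₂ μ₁ μ₂ k - 1/st5d C₁ C₂ μ₁ μ₂ (k-1))
      ≤ st5w C₁ v (i+1) k - st5w C₁ v i k


lemma st5_minlb (a b c e : ℝ) : min (a-c) (b-e) ≤ min a b - min c e := by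
  rcases le_total a b with h | h
  · rw [min_eq_left h]; linarith [min_le_left (a-c) (b-e), min_le_left c e]
  · rw [min_eq_right h]; linarith [min_le_right (a-c) (b-e), min_le_right c e]

lemma st5_minub (a b c e : ℝ) : min a b - min c e ≤ max (a-c) (b-e) := by
  rcases le_total c e with h | h
  · rw [min_eq_left h]; linarith [le_max_left (a-c) (b-e), min_le_left a b]
  · rw [min_eq_right h]; linarith [le_max_right (a-c) (b-e), min_le_right a b]

lemma st5_Gstep (i k : ℕ) :
    st5G C₁ h₀ h₁ h₂ (i+1) k - st5G C₁ h₀ h₁ h₂ i k = h₀ := by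
  unfold st5G; push_cast; ring

lemma st5_Gge (hh₀ : 0 < h₀) (hh₁ : 0 < h₁) (hh₂ : 0 < h₂) (i k : ℕ) :
    h₀ ≤ st5G C₁ h₀ h₁ h₂ i k := by
  unfold st5G
  have c1 : (0:ℝ) ≤ (i:ℝ) := Nat.cast_nonneg _
  have c2 : (0:ℝ) ≤ (k:ℝ) := Nat.cast_nonneg _
  have c3 : (0:ℝ) ≤ ((C₁-k:ℕ):ℝ) := Nat.cast_nonneg _
  nlinarith

set_option maxHeartbeats 1000000 in
lemma st5_stepP (hC₂pos : 1 ≤ C₂) (hC : C₂ < C₁) (hμ₁ : 0 < μ₁) (hμ₂ : 0 < μ₂)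
    (hh₀ : 0 < h₀) (hh₁ : 0 < h₁) (hh₂ : 0 < h₂)
    (hv : IsValue C₁ C₂ μ₁ μ₂ h₀ h₁ h₂ v) (hμ : μ₁ ≤ μ₂) (hcost : h₁ / μ₁ ≤ h₂ / μ₂)
    (i : ℕ) (hP : st5P C₁ v C₂ i) (hQ : st5Q C₁ C₂ μ₁ μ₂ h₀ v i) :
    st5P C₁ v C₂ (i+1) := by
  intro k hk1 hkK
  have hkC : k ≤ C₁ := by omega
  have hdk := st5d_pos (μ₁ := μ₁) (μ₂ := μ₂) hC₂pos hC hμ₁ hμ₂ k hkC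
  have hdk' := st5d_pos (μ₁ := μ₁) (μ₂ := μ₂) hC₂pos hC hμ₁ hμ₂ (k-1) (by omega)
  have hmk : min (C₁ - k) C₂ = C₂ := by omega
  have hA := st5_key hC₂pos hC hμ₁ hμ₂ hv i k hk1 hkC
  rw [hmk, max_eq_right (hP k hk1 hkK)] at hA
  have hC2μ : (0:ℝ) ≤ (C₂:ℝ)*μ₂ := by positivity
  have hAle : st5d C₁ C₂ μ₁ μ₂ k * (st5w C₁ v (i+1) k - st5w C₁ v i k)
      ≤ st5G C₁ h₀ h₁ h₂ i k := by
    have hm := min_le_right (st5D C₁ v i (k+1)) 0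
    nlinarith [mul_nonneg hC2μ (neg_nonneg.mpr hm)]
  have hB : st5d C₁ C₂ μ₁ μ₂ (k-1) * (st5w C₁ v (i+1) (k-1) - st5w C₁ v i (k-1))
      = st5G C₁ h₀ h₁ h₂ i (k-1) + (C₂:ℝ)*μ₂ * st5D C₁ v i k := by
    rcases Nat.lt_or_ge 1 k with hk2 | hk2
    · have hB0 := st5_key hC₂pos hC hμ₁ hμ₂ hv i (k-1) (by omega) (by omega)
      have e : k - 1 + 1 = k := by omega
      have hmk' : min (C₁ - (k-1)) C₂ = C₂ := by omega
      rw [e, hmk', max_eq_right (hP (k-1) (by omega) (by omega)),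
        min_eq_left (hP k hk1 hkK)] at hB0
      rw [hB0]; ring
    · have hke : k = 1 := by omega
      subst hke
      have hB0 := st5_key0 hC₂pos hC hμ₁ hμ₂ hv (v := v) i
      have hmk' : min C₁ C₂ = C₂ := by omega
      rw [hmk', min_eq_left (hP 1 le_rfl hkK)] at hB0
      rw [show (1:ℕ) - 1 = 0 from rfl, hB0]; try ring
  have hQB := hQ (k-1) (by omega)
  have hdd : st5d C₁ C₂ μ₁ μ₂ k = st5d C₁ C₂ μ₁ μ₂ (k-1) + μ₁ := by
    unfold st5d
    have hmk' : min (C₁ - (k-1)) C₂ = C₂ := by omega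
    rw [hmk, hmk']
    have : ((k-1:ℕ):ℝ) = (k:ℝ) - 1 := by push_cast [Nat.cast_sub hk1]; ring
    rw [this]; ring
  have hGd : st5G C₁ h₀ h₁ h₂ i k - st5G C₁ h₀ h₁ h₂ i (k-1) = h₁ - h₂ := by
    unfold st5G
    have e2 : C₁ - (k-1) = (C₁-k)+1 := by omega
    rw [e2]
    have : ((k-1:ℕ):ℝ) = (k:ℝ) - 1 := by push_cast [Nat.cast_sub hk1]; ring
    rw [this]; push_cast; ring
  have hGpos := st5_Gge (C₁ := C₁) hh₀ hh₁ hh₂ i (k-1)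
  have hDk := hP k hk1 hkK
  have hh12 := st5_h12 hμ₁ hμ₂ hμ hcost hh₂
  have hd'C : (C₂:ℝ)*μ₂ ≤ st5d C₁ C₂ μ₁ μ₂ (k-1) := by
    unfold st5d
    have hmk' : min (C₁ - (k-1)) C₂ = C₂ := by omega
    rw [hmk']
    have : (0:ℝ) ≤ ((k-1:ℕ):ℝ)*μ₁ := by positivity
    linarith
  have hgoal : st5D C₁ v (i+1) k = st5D C₁ v i k
      + (st5w C₁ v (i+1) k - st5w C₁ v i k)
      - (st5w C₁ v (i+1) (k-1) - st5w C₁ v i (k-1)) := by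
    unfold st5D; ring
  rw [hgoal]
  set dk := st5d C₁ C₂ μ₁ μ₂ k
  set dk' := st5d C₁ C₂ μ₁ μ₂ (k-1)
  set a := st5w C₁ v (i+1) k - st5w C₁ v i k
  set b := st5w C₁ v (i+1) (k-1) - st5w C₁ v i (k-1)
  set D := st5D C₁ v i k
  set Gk := st5G C₁ h₀ h₁ h₂ i k
  set Gk' := st5G C₁ h₀ h₁ h₂ i (k-1)
  have t1 : dk' * (dk * a) ≤ dk' * Gk := mul_le_mul_of_nonneg_left hAle hdk'.le
  have t2 : dk * (dk' * b) = dk * Gk' + dk * ((C₂:ℝ)*μ₂ * D) := by rw [hB]; ring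
  have t3 : μ₁ * h₀ ≤ μ₁ * Gk' := mul_le_mul_of_nonneg_left hGpos hμ₁.le
  have t4 : D * (dk * (dk' - (C₂:ℝ)*μ₂)) ≤ 0 :=
    mul_nonpos_of_nonpos_of_nonneg hDk (by nlinarith)
  have t5 : dk' * (h₁ - h₂) ≤ 0 :=
    mul_nonpos_of_nonneg_of_nonpos hdk'.le (by linarith)
  have t6 : dk' * Gk - dk * Gk' = dk' * (h₁ - h₂) - μ₁ * Gk' := by
    rw [hdd]
    linear_combination dk' * hGd
  have hmain : (dk * dk') * (D + a - b) ≤ 0 := by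
    nlinarith [t1, t2, t3, t4, t5, t6, hh₀.le, hμ₁.le, mul_nonneg hμ₁.le hh₀.le]
  by_contra hcon
  push_neg at hcon
  nlinarith [mul_pos (mul_pos hdk hdk') hcon]

lemma st5_stepQ (hC₂pos : 1 ≤ C₂) (hC : C₂ < C₁) (hμ₁ : 0 < μ₁) (hμ₂ : 0 < μ₂)
    (hh₀ : 0 < h₀) (hh₁ : 0 < h₁) (hh₂ : 0 < h₂)
    (hv : IsValue C₁ C₂ μ₁ μ₂ h₀ h₁ h₂ v)
    (i : ℕ) (hQ : st5Q C₁ C₂ μ₁ μ₂ h₀ v i) :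
    st5Q C₁ C₂ μ₁ μ₂ h₀ v (i+1) := by
  have hw : ∀ j, j ≤ C₁ → st5w C₁ v i j ≤ st5w C₁ v (i+1) j := by
    intro j hj
    have h1 := hQ j hj
    have h2 := st5d_pos (μ₁ := μ₁) (μ₂ := μ₂) hC₂pos hC hμ₁ hμ₂ j hj
    nlinarith
  have hM : ∀ j, 1 ≤ j → j ≤ C₁ → st5M C₁ v i j ≤ st5M C₁ v (i+1) j := by
    intro j hj1 hj
    exact min_le_min (hw j hj) (hw (j-1) (by omega))
  intro k hkC
  rcases Nat.eq_zero_or_pos k with hk0 | hk1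
  · subst hk0
    have h1 := st5_bellman0 hC₂pos hC hμ₁ hμ₂ hv (v := v) (i+1)
    have h2 := st5_bellman0 hC₂pos hC hμ₁ hμ₂ hv (v := v) i
    have hG := st5_Gstep (C₁ := C₁) (h₀ := h₀) (h₁ := h₁) (h₂ := h₂) i 0
    have hX := hM 1 le_rfl (by omega)
    have hc : (0:ℝ) ≤ ((min C₁ C₂ : ℕ):ℝ)*μ₂ := by positivity
    nlinarith [mul_le_mul_of_nonneg_left hX hc]
  · have h1 := st5_bellman hC₂pos hC hμ₁ hμ₂ hv (i+1) k hk1 hkC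
    have h2 := st5_bellman hC₂pos hC hμ₁ hμ₂ hv i k hk1 hkC
    have hG := st5_Gstep (C₁ := C₁) (h₀ := h₀) (h₁ := h₁) (h₂ := h₂) i k
    have hXk := hM k hk1 hkC
    have hc1 : (0:ℝ) ≤ (k:ℝ)*μ₁ := by positivity
    rcases Nat.lt_or_ge k C₁ with hklt | hke
    · have hXk1 := hM (k+1) (by omega) (by omega)
      have e : k + 1 - 1 = k := rfl
      have hc2 : (0:ℝ) ≤ ((min (C₁-k) C₂ : ℕ):ℝ)*μ₂ := by positivity
      nlinarith [mul_le_mul_of_nonneg_left hXk hc1, mul_le_mul_of_nonneg_left hXk1 hc2]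
    · have e0 : min (C₁ - k) C₂ = 0 := by omega
      rw [e0] at h1 h2
      push_cast at h1 h2
      nlinarith [mul_le_mul_of_nonneg_left hXk hc1]


lemma st5_arith (μ₁ μ₂ h₀ kr lr X1 X2 X3 A1 A2 : ℝ)
    (hμ₁ : 0 < μ₁) (hμ₂ : 0 < μ₂) (hkr2 : 2 ≤ kr) (hlr0 : 0 ≤ lr)
    (hX2lb : A1 ≤ X2) (hX2ub : X2 ≤ A2) (hX1ub : X1 ≤ A1)
    (hX3 : lr*μ₂*A2 ≤ lr*μ₂*X3) (hmA : A1 ≤ A2) :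
    h₀*(((kr-1)*μ₁+(lr+1)*μ₂) - (kr*μ₁+lr*μ₂))
      ≤ ((kr-1)*μ₁+(lr+1)*μ₂)*(h₀ + kr*μ₁*X2 + lr*μ₂*X3)
        - (kr*μ₁+lr*μ₂)*(h₀ + (kr-1)*μ₁*X1 + (lr+1)*μ₂*X2) := by
  have e1 : (0:ℝ) ≤ kr*μ₁ + lr*μ₂ :=
    add_nonneg (mul_nonneg (by linarith) hμ₁.le) (mul_nonneg hlr0 hμ₂.le)
  have hcoef2 : (0:ℝ) ≤ (kr*μ₁+lr*μ₂)*((kr-1)*μ₁) :=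
    mul_nonneg e1 (mul_nonneg (by linarith) hμ₁.le)
  have h2 : (kr*μ₁+lr*μ₂)*((kr-1)*μ₁)*X1 ≤ (kr*μ₁+lr*μ₂)*((kr-1)*μ₁)*A1 :=
    mul_le_mul_of_nonneg_left hX1ub hcoef2
  have hD'pos : (0:ℝ) < (kr-1)*μ₁+(lr+1)*μ₂ :=
    add_pos_of_nonneg_of_pos (mul_nonneg (by linarith) hμ₁.le)
      (mul_pos (by linarith) hμ₂)
  have h3 : ((kr-1)*μ₁+(lr+1)*μ₂)*(lr*μ₂*A2) ≤ ((kr-1)*μ₁+(lr+1)*μ₂)*(lr*μ₂*X3) :=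
    mul_le_mul_of_nonneg_left hX3 hD'pos.le
  rcases le_or_gt 0 (kr*μ₁*((kr-1)*μ₁+(lr+1)*μ₂) - (lr+1)*μ₂*(kr*μ₁+lr*μ₂)) with hc0 | hc0
  · have h1 := mul_le_mul_of_nonneg_left hX2lb hc0
    have h4 : 0 ≤ lr*μ₂*((kr-1)*μ₁+(lr+1)*μ₂)*(A2-A1) :=
      mul_nonneg (mul_nonneg (mul_nonneg hlr0 hμ₂.le) hD'pos.le) (by linarith)
    nlinarith [h1, h2, h3, h4]
  · have h1 : (kr*μ₁*((kr-1)*μ₁+(lr+1)*μ₂) - (lr+1)*μ₂*(kr*μ₁+lr*μ₂))*A2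
        ≤ (kr*μ₁*((kr-1)*μ₁+(lr+1)*μ₂) - (lr+1)*μ₂*(kr*μ₁+lr*μ₂))*X2 :=
      mul_le_mul_of_nonpos_left hX2ub hc0.le
    have h4 : 0 ≤ (kr-1)*μ₁*(kr*μ₁+lr*μ₂)*(A2-A1) := by
      apply mul_nonneg _ (by linarith)
      exact mul_nonneg (mul_nonneg (by linarith) hμ₁.le) e1
    nlinarith [h1, h2, h3, h4]

set_option maxHeartbeats 2000000 in
lemma st5_stepR (hC₂pos : 1 ≤ C₂) (hC : C₂ < C₁) (hμ₁ : 0 < μ₁) (hμ₂ : 0 < μ₂)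
    (hh₀ : 0 < h₀) (hh₁ : 0 < h₁) (hh₂ : 0 < h₂)
    (hv : IsValue C₁ C₂ μ₁ μ₂ h₀ h₁ h₂ v) (hμ : μ₁ ≤ μ₂)
    (i : ℕ) (hP : st5P C₁ v C₂ i) (hP1 : st5P C₁ v C₂ (i+1))
    (hR : st5R C₁ C₂ μ₁ μ₂ h₀ v i) :
    st5R C₁ C₂ μ₁ μ₂ h₀ v (i+1) := by
  have hdle : ∀ j, C₁-C₂+1 ≤ j → j ≤ C₁ → st5d C₁ C₂ μ₁ μ₂ j ≤ st5d C₁ C₂ μ₁ μ₂ (j-1) := by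
    intro j hj1 hj2
    unfold st5d
    rw [show min (C₁-j) C₂ = C₁-j from by omega,
      show min (C₁-(j-1)) C₂ = (C₁-j)+1 from by omega,
      show ((j-1:ℕ):ℝ) = (j:ℝ)-1 from by push_cast [Nat.cast_sub (by omega : 1 ≤ j)]; ring]
    push_cast
    linarith
  have hmono : ∀ j, C₁-C₂+1 ≤ j → j ≤ C₁ →
      st5w C₁ v (i+1) (j-1) - st5w C₁ v i (j-1) ≤ st5w C₁ v (i+1) j - st5w C₁ v i j := by
    intro j hj1 hj2
    have h := hR j hj1 hj2
    have h1 := one_div_le_one_div_of_le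
      (st5d_pos (μ₁ := μ₁) (μ₂ := μ₂) hC₂pos hC hμ₁ hμ₂ j hj2) (hdle j hj1 hj2)
    nlinarith
  intro k hk1 hkC
  have hk2 : 2 ≤ k := by omega
  have hdkpos := st5d_pos (μ₁ := μ₁) (μ₂ := μ₂) hC₂pos hC hμ₁ hμ₂ k hkC
  have hdk'pos := st5d_pos (μ₁ := μ₁) (μ₂ := μ₂) hC₂pos hC hμ₁ hμ₂ (k-1) (by omega)
  have hmk : min (C₁-k) C₂ = C₁-k := by omega
  have hmk' : min (C₁-(k-1)) C₂ = (C₁-k)+1 := by omega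
  have hck : ((k-1:ℕ):ℝ) = (k:ℝ)-1 := by push_cast [Nat.cast_sub (by omega : 1 ≤ k)]; ring
  have hc1 : (((C₁-k)+1:ℕ):ℝ) = ((C₁-k:ℕ):ℝ)+1 := by push_cast; ring
  set kr := (k:ℝ) with hkrdef
  set lr := ((C₁-k:ℕ):ℝ) with hlrdef
  have hkr2 : (2:ℝ) ≤ kr := by exact_mod_cast Nat.ofNat_le_cast.mpr hk2
  have hlr0 : (0:ℝ) ≤ lr := Nat.cast_nonneg _
  set X1 := st5M C₁ v (i+1) (k-1) - st5M C₁ v i (k-1) with hX1def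
  set X2 := st5M C₁ v (i+1) k - st5M C₁ v i k with hX2def
  set X3 := st5M C₁ v (i+1) (k+1) - st5M C₁ v i (k+1) with hX3def
  set A1 := st5w C₁ v (i+1) (k-1) - st5w C₁ v i (k-1) with hA1def
  set A2 := st5w C₁ v (i+1) k - st5w C₁ v i k with hA2def
  set a := st5w C₁ v (i+1+1) k - st5w C₁ v (i+1) k with hadef
  set b := st5w C₁ v (i+1+1) (k-1) - st5w C₁ v (i+1) (k-1) with hbdef
  -- Bellman difference identities
  have hb1 := st5_bellman hC₂pos hC hμ₁ hμ₂ hv (i+1) k (by omega) hkC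
  have hb2 := st5_bellman hC₂pos hC hμ₁ hμ₂ hv i k (by omega) hkC
  rw [hmk] at hb1 hb2
  have hG := st5_Gstep (C₁ := C₁) (h₀ := h₀) (h₁ := h₁) (h₂ := h₂) i k
  have hEk : st5d C₁ C₂ μ₁ μ₂ k * a = h₀ + kr*μ₁*X2 + lr*μ₂*X3 := by
    rw [hadef, hX2def, hX3def]
    linear_combination hb1 - hb2 + hG
  have hb1' := st5_bellman hC₂pos hC hμ₁ hμ₂ hv (i+1) (k-1) (by omega) (by omega)
  have hb2' := st5_bellman hC₂pos hC hμ₁ hμ₂ hv i (k-1) (by omega) (by omega)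
  rw [hmk', show k-1+1 = k from by omega] at hb1' hb2'
  have hG' := st5_Gstep (C₁ := C₁) (h₀ := h₀) (h₁ := h₁) (h₂ := h₂) i (k-1)
  have hEk' : st5d C₁ C₂ μ₁ μ₂ (k-1) * b = h₀ + (kr-1)*μ₁*X1 + (lr+1)*μ₂*X2 := by
    rw [hbdef, hX1def, hX2def]
    rw [hck, hc1] at hb1' hb2'
    linear_combination hb1' - hb2' + hG'
  have hdke : st5d C₁ C₂ μ₁ μ₂ k = kr*μ₁ + lr*μ₂ := by
    unfold st5d; rw [hmk]
  have hdk'e : st5d C₁ C₂ μ₁ μ₂ (k-1) = (kr-1)*μ₁ + (lr+1)*μ₂ := by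
    unfold st5d; rw [hmk', hck, hc1]
  -- bounds on the X's
  have hX2lb : A1 ≤ X2 := by
    have h := st5_minlb (st5w C₁ v (i+1) k) (st5w C₁ v (i+1) (k-1))
      (st5w C₁ v i k) (st5w C₁ v i (k-1))
    rw [min_eq_right (hmono k hk1 hkC)] at h
    exact h
  have hX2ub : X2 ≤ A2 := by
    have h := st5_minub (st5w C₁ v (i+1) k) (st5w C₁ v (i+1) (k-1))
      (st5w C₁ v i k) (st5w C₁ v i (k-1))
    rw [max_eq_left (hmono k hk1 hkC)] at h
    exact h
  have hX3 : lr*μ₂*A2 ≤ lr*μ₂*X3 := by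
    rcases Nat.lt_or_ge k C₁ with hklt | hke
    · have h := st5_minlb (st5w C₁ v (i+1) (k+1)) (st5w C₁ v (i+1) k)
        (st5w C₁ v i (k+1)) (st5w C₁ v i k)
      have hm := hmono (k+1) (by omega) (by omega)
      rw [show k+1-1 = k from rfl] at hm
      rw [min_eq_right hm] at h
      exact mul_le_mul_of_nonneg_left h (by positivity)
    · have : lr = 0 := by rw [hlrdef, show C₁-k = 0 from by omega]; norm_num
      rw [this]; simp
  have hX1ub : X1 ≤ A1 := by
    rcases Nat.lt_or_ge (C₁-C₂+1) k with hkgt | hkeq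
    · have h := st5_minub (st5w C₁ v (i+1) (k-1)) (st5w C₁ v (i+1) (k-1-1))
        (st5w C₁ v i (k-1)) (st5w C₁ v i (k-1-1))
      rw [max_eq_left (hmono (k-1) (by omega) (by omega))] at h
      exact h
    · have hkK : k = C₁-C₂+1 := by omega
      have m1 : st5M C₁ v (i+1) (k-1) = st5w C₁ v (i+1) (k-1) := by
        apply min_eq_left
        have := hP1 (k-1) (by omega) (by omega)
        unfold st5D at this
        linarith
      have m2 : st5M C₁ v i (k-1) = st5w C₁ v i (k-1) := by
        apply min_eq_left
        have := hP (k-1) (by omega) (by omega)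
        unfold st5D at this
        linarith
      rw [hX1def, m1, m2]
  -- multiplied inequality
  have hmul : h₀*(st5d C₁ C₂ μ₁ μ₂ (k-1) - st5d C₁ C₂ μ₁ μ₂ k)
      ≤ st5d C₁ C₂ μ₁ μ₂ (k-1) * (st5d C₁ C₂ μ₁ μ₂ k * a)
        - st5d C₁ C₂ μ₁ μ₂ k * (st5d C₁ C₂ μ₁ μ₂ (k-1) * b) := by
    rw [hEk, hEk', hdke, hdk'e]
    exact st5_arith μ₁ μ₂ h₀ kr lr X1 X2 X3 A1 A2 hμ₁ hμ₂ hkr2 hlr0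
      hX2lb hX2ub hX1ub hX3 (hmono k hk1 hkC)
  -- conclude
  have hfrac : a - (b + h₀*(1/st5d C₁ C₂ μ₁ μ₂ k - 1/st5d C₁ C₂ μ₁ μ₂ (k-1)))
      = (st5d C₁ C₂ μ₁ μ₂ (k-1) * (st5d C₁ C₂ μ₁ μ₂ k * a)
        - st5d C₁ C₂ μ₁ μ₂ k * (st5d C₁ C₂ μ₁ μ₂ (k-1) * b)
        - h₀*(st5d C₁ C₂ μ₁ μ₂ (k-1) - st5d C₁ C₂ μ₁ μ₂ k))
        / (st5d C₁ C₂ μ₁ μ₂ k * st5d C₁ C₂ μ₁ μ₂ (k-1)) := by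
    field_simp
    ring
  have hnn : 0 ≤ a - (b + h₀*(1/st5d C₁ C₂ μ₁ μ₂ k - 1/st5d C₁ C₂ μ₁ μ₂ (k-1))) := by
    rw [hfrac]
    apply div_nonneg (by linarith) (mul_pos hdkpos hdk'pos).le
  linarith


lemma st5_base (hC₂pos : 1 ≤ C₂) (hC : C₂ < C₁) (hμ₁ : 0 < μ₁) (hμ₂ : 0 < μ₂)
    (hh₀ : 0 < h₀) (hh₁ : 0 < h₁) (hh₂ : 0 < h₂)
    (hv : IsValue C₁ C₂ μ₁ μ₂ h₀ h₁ h₂ v) (hμ : μ₁ ≤ μ₂) (hcost : h₁ / μ₁ ≤ h₂ / μ₂) :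
    st5P C₁ v C₂ 0 ∧ st5Q C₁ C₂ μ₁ μ₂ h₀ v 0 ∧ st5R C₁ C₂ μ₁ μ₂ h₀ v 0 := by
  have hΔ : ∀ j, j ≤ C₁ → st5w C₁ v 1 j - st5w C₁ v 0 j
      = h₀*(1/st5d C₁ C₂ μ₁ μ₂ j) + h₁/μ₁ := by
    intro j hj
    have h := st5_Delta0 hC₂pos hC hμ₁ hμ₂ hv hcost hh₂ j hj
    have hd := st5d_pos (μ₁ := μ₁) (μ₂ := μ₂) hC₂pos hC hμ₁ hμ₂ j hj
    rw [mul_comm] at h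
    field_simp at h ⊢
    linarith
  refine ⟨?_, ?_, ?_⟩
  · intro k hk1 hkK
    exact st5_D0_nonpos hC₂pos hC hμ₁ hμ₂ hv hcost hh₂ k hk1 (by omega)
  · intro k hkC
    rw [st5_Delta0 hC₂pos hC hμ₁ hμ₂ hv hcost hh₂ k hkC]
    have hd := st5d_pos (μ₁ := μ₁) (μ₂ := μ₂) hC₂pos hC hμ₁ hμ₂ k hkC
    nlinarith [div_pos hh₁ hμ₁]
  · intro k hk1 hkC
    rw [hΔ k hkC, hΔ (k-1) (by omega)]
    ring_nf
    exact le_refl _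

lemma st5_inv (hC₂pos : 1 ≤ C₂) (hC : C₂ < C₁) (hμ₁ : 0 < μ₁) (hμ₂ : 0 < μ₂)
    (hh₀ : 0 < h₀) (hh₁ : 0 < h₁) (hh₂ : 0 < h₂)
    (hv : IsValue C₁ C₂ μ₁ μ₂ h₀ h₁ h₂ v) (hμ : μ₁ ≤ μ₂) (hcost : h₁ / μ₁ ≤ h₂ / μ₂) :
    ∀ i, st5P C₁ v C₂ i ∧ st5Q C₁ C₂ μ₁ μ₂ h₀ v i ∧ st5R C₁ C₂ μ₁ μ₂ h₀ v i := by
  intro i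
  induction i with
  | zero => exact st5_base hC₂pos hC hμ₁ hμ₂ hh₀ hh₁ hh₂ hv hμ hcost
  | succ n ih =>
    obtain ⟨hP, hQ, hR⟩ := ih
    have hP1 := st5_stepP hC₂pos hC hμ₁ hμ₂ hh₀ hh₁ hh₂ hv hμ hcost n hP hQ
    exact ⟨hP1, st5_stepQ hC₂pos hC hμ₁ hμ₂ hh₀ hh₁ hh₂ hv n hQ,
      st5_stepR hC₂pos hC hμ₁ hμ₂ hh₀ hh₁ hh₂ hv hμ n hP hP1 hR⟩

end St5L

theorem stmt5
    (C₁ C₂ : ℕ) (hC₂pos : 1 ≤ C₂) (hC : C₂ < C₁)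
    (μ₁ μ₂ h₀ h₁ h₂ : ℝ)
    (hμ₁ : 0 < μ₁) (hμ₂ : 0 < μ₂)
    (hh₀ : 0 < h₀) (hh₁ : 0 < h₁) (hh₂ : 0 < h₂)
    (v : ℕ → ℕ → ℕ → ℝ) (hv : IsValue C₁ C₂ μ₁ μ₂ h₀ h₁ h₂ v)
    (hμ : μ₁ ≤ μ₂) (hcost : h₁ / μ₁ ≤ h₂ / μ₂)
    (k ℓ : ℕ) (hkl : k + ℓ = C₁) (hk : 1 ≤ k) (hℓ : ℓ < C₂) :
    (∀ i : ℕ, Dv v i k ℓ - Dv v (i + 1) k ℓ ≤ 0) ∧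
    (μ₁ < μ₂ →
      ∃ N : ℕ, (∀ i : ℕ, Dv v i k ℓ ≤ 0 ↔ i < N) ∧
        ∃ I : ℕ, ∀ i : ℕ, I ≤ i → 0 < Dv v i k ℓ) := by
  have hk1' : C₁ - C₂ + 1 ≤ k := by omega
  have hkC : k ≤ C₁ := by omega
  have hDv : ∀ i, Dv v i k ℓ = st5D C₁ v i k := by
    intro i
    unfold Dv st5D st5w
    rw [show C₁ - k = ℓ from by omega, show C₁ - (k-1) = ℓ+1 from by omega]
  have hdkpos := st5d_pos (μ₁ := μ₁) (μ₂ := μ₂) hC₂pos hC hμ₁ hμ₂ k hkC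
  have hdk'pos := st5d_pos (μ₁ := μ₁) (μ₂ := μ₂) hC₂pos hC hμ₁ hμ₂ (k-1) (by omega)
  have hdd : st5d C₁ C₂ μ₁ μ₂ (k-1) = st5d C₁ C₂ μ₁ μ₂ k + (μ₂ - μ₁) := by
    unfold st5d
    rw [show min (C₁-k) C₂ = C₁-k from by omega,
      show min (C₁-(k-1)) C₂ = (C₁-k)+1 from by omega,
      show ((k-1:ℕ):ℝ) = (k:ℝ)-1 from by push_cast [Nat.cast_sub (by omega : 1 ≤ k)]; ring]
    push_cast
    ring
  set c : ℝ := h₀*(1/st5d C₁ C₂ μ₁ μ₂ k - 1/st5d C₁ C₂ μ₁ μ₂ (k-1)) with hcdef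
  have hc0 : 0 ≤ c := by
    have h1 : st5d C₁ C₂ μ₁ μ₂ k ≤ st5d C₁ C₂ μ₁ μ₂ (k-1) := by rw [hdd]; linarith
    have := one_div_le_one_div_of_le hdkpos h1
    have : 0 ≤ 1/st5d C₁ C₂ μ₁ μ₂ k - 1/st5d C₁ C₂ μ₁ μ₂ (k-1) := by linarith
    rw [hcdef]
    positivity
  have hstep : ∀ i, st5D C₁ v i k + c ≤ st5D C₁ v (i+1) k := by
    intro i
    have hR := (st5_inv hC₂pos hC hμ₁ hμ₂ hh₀ hh₁ hh₂ hv hμ hcost i).2.2 k hk1' hkC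
    unfold st5D
    rw [hcdef]
    unfold st5w at hR ⊢
    linarith [hR]
  constructor
  · intro i
    rw [hDv i, hDv (i+1)]
    linarith [hstep i, hc0]
  · intro hlt
    have hcpos : 0 < c := by
      have h1 : st5d C₁ C₂ μ₁ μ₂ k < st5d C₁ C₂ μ₁ μ₂ (k-1) := by rw [hdd]; linarith
      have := one_div_lt_one_div_of_lt hdkpos h1
      rw [hcdef]
      have : 0 < 1/st5d C₁ C₂ μ₁ μ₂ k - 1/st5d C₁ C₂ μ₁ μ₂ (k-1) := by linarith
      positivity
    have hmono2 : Monotone (fun i => st5D C₁ v i k) :=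
      monotone_nat_of_le_succ (fun n => by linarith [hstep n, hc0])
    have hgrow : ∀ i : ℕ, st5D C₁ v 0 k + (i:ℝ)*c ≤ st5D C₁ v i k := by
      intro i
      induction i with
      | zero => simp
      | succ n ihn =>
        have := hstep n
        push_cast
        push_cast at ihn
        linarith
    obtain ⟨n, hn⟩ := exists_nat_gt ((1 - st5D C₁ v 0 k)/c)
    have hpos : ∀ i : ℕ, n ≤ i → 0 < st5D C₁ v i k := by
      intro i hi
      have h1 := hgrow i
      have h2 : (n:ℝ)*c ≤ (i:ℝ)*c :=
        mul_le_mul_of_nonneg_right (by exact_mod_cast hi) hcpos.le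
      have h3 : 1 - st5D C₁ v 0 k < (n:ℝ)*c := by
        rw [div_lt_iff₀ hcpos] at hn
        linarith
      linarith
    have hex : ∃ i, 0 < st5D C₁ v i k := ⟨n, hpos n le_rfl⟩
    refine ⟨Nat.find hex, ?_, ⟨n, fun i hi => ?_⟩⟩
    · intro i
      constructor
      · intro hle
        by_contra hnlt
        push_neg at hnlt
        have h1 := hmono2 hnlt
        have h2 := Nat.find_spec hex
        rw [hDv i] at hle
        simp only at h1
        linarith
      · intro hiN
        have h1 := Nat.find_min hex hiN
        rw [hDv i]
        linarith [not_lt.mp h1]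
    · rw [hDv i]
      exact hpos i hi
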